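/- (Karlin/Fekete criterion) Let 1 ≤ k ≤ m, n and let A be an m×n real matrix. Then A is SSR_k (for each 1 ≤ r ≤ k all r×r minors of A are nonzero and share a common sign ε_r) if and only if for each 1 ≤ r ≤ k all contiguous r×r minors of A (those with consecutive row indices and consecutive column indices) are nonzero and share a common sign. -/

import Mathlib

open Matrix Filter

set_option maxHeartbeats 1000000

/-- Number of sign changes in a list of reals (consecutive pairs with negative product). -/
noncomputable def signChanges (l : List ℝ) : ℕ :=
  (l.zip l.tail).countP (fun p => decide (p.1 * p.2 < 0))

/-- `S^-(v)`: sign changes of the coordinates of `v` after discarding zero entries. -/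
noncomputable def Sm {n : ℕ} (v : Fin n → ℝ) : ℕ :=
  signChanges ((List.ofFn v).filter (fun x => decide (x ≠ 0)))

/-- `S^+(v)`: maximal number of sign changes over all ±1 completions of the zero
entries of `v`, with the convention `S^+(0) = n`. -/
noncomputable def Sp {n : ℕ} (v : Fin n → ℝ) : ℕ :=
  if v = 0 then n
  else Finset.univ.sup (fun σ : Fin n → Bool =>
    signChanges (List.ofFn (fun i => if v i = 0 then (if σ i then (1:ℝ) else -1) else v i)))

/-- First nonzero entry of a vector (`0` if the vector is zero). -/
noncomputable def firstNz {n : ℕ} (v : Fin n → ℝ) : ℝ :=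
  ((List.ofFn v).filter (fun x => decide (x ≠ 0))).headI

/-- `A` is strictly sign regular with sign pattern `ε`:
every `r × r` minor (`1 ≤ r ≤ min m n`) is nonzero with sign `ε r`. -/
def ssrPattern {m n : ℕ} (A : Matrix (Fin m) (Fin n) ℝ) (ε : ℕ → ℝ) : Prop :=
  ∀ r : ℕ, 1 ≤ r → r ≤ min m n → ∀ (f : Fin r → Fin m) (g : Fin r → Fin n),
    StrictMono f → StrictMono g → 0 < ε r * (A.submatrix f g).det

/-- `A` is sign regular with sign pattern `ε`:
every nonzero `r × r` minor (`1 ≤ r ≤ min m n`) has sign `ε r`. -/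
def srPattern {m n : ℕ} (A : Matrix (Fin m) (Fin n) ℝ) (ε : ℕ → ℝ) : Prop :=
  ∀ r : ℕ, 1 ≤ r → r ≤ min m n → ∀ (f : Fin r → Fin m) (g : Fin r → Fin n),
    StrictMono f → StrictMono g → 0 ≤ ε r * (A.submatrix f g).det

/-- The map `f` picks out consecutive indices. -/
def Contig {r m : ℕ} (f : Fin r → Fin m) : Prop :=
  ∃ a : ℕ, ∀ i : Fin r, (f i : ℕ) = a + (i : ℕ)



/-- Syzygy: for r+1 vectors in ℝ^r and a linear functional φ, the alternating
sum of φ(v_l) times the minor omitting v_l vanishes. -/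
lemma syz {r : ℕ} (v : Fin (r+1) → Fin r → ℝ) (φ : (Fin r → ℝ) →ₗ[ℝ] ℝ) :
    ∑ l : Fin (r+1), (-1:ℝ)^(l:ℕ) * φ (v l) *
      (Matrix.of (fun i j => v (l.succAbove i) j)).det = 0 := by
  set B : Matrix (Fin (r+1)) (Fin (r+1)) ℝ :=
    Matrix.of (fun i => Fin.snoc (v i) (φ (v i))) with hB
  have hphi : ∀ x : Fin r → ℝ, φ x = ∑ j, x j * φ (Pi.single j 1) := by
    intro x
    conv_lhs => rw [← Finset.univ_sum_single x]
    rw [map_sum]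
    refine Finset.sum_congr rfl fun j _ => ?_
    have : Pi.single j (x j) = (x j) • (Pi.single j (1:ℝ) : Fin r → ℝ) := by
      funext t
      by_cases h : t = j <;> simp [Pi.single_apply, h]
    rw [this, φ.map_smul, smul_eq_mul]
  have hdet : B.det = 0 := by
    apply (Matrix.exists_mulVec_eq_zero_iff).mp
    refine ⟨Fin.snoc (fun j => φ (Pi.single j 1)) (-1), ?_, ?_⟩
    · intro h
      have := congrFun h (Fin.last r)
      simp [Fin.snoc_last] at this
    · funext i
      simp only [Matrix.mulVec, dotProduct]
      rw [Fin.sum_univ_castSucc]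
      simp only [hB, Matrix.of_apply, Fin.snoc_castSucc, Fin.snoc_last, Pi.zero_apply]
      rw [← hphi (v i)]
      ring
  have hexp := Matrix.det_succ_column B (Fin.last r)
  rw [hdet] at hexp
  have hsub : ∀ i : Fin (r+1),
      (B.submatrix i.succAbove (Fin.last r).succAbove) =
        Matrix.of (fun s t => v (i.succAbove s) t) := by
    intro i
    ext s t
    simp [hB, Matrix.submatrix, Fin.succAbove_last, Fin.snoc_castSucc]
  have hterm : ∀ i : Fin (r+1), B i (Fin.last r) = φ (v i) := by
    intro i; simp [hB, Fin.snoc_last]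
  have hrr : ((-1:ℝ))^r * (-1)^r = 1 := by
    rw [← pow_add]; exact Even.neg_one_pow ⟨r, rfl⟩
  have h0 : (0:ℝ) = ∑ i : Fin (r+1), (-1:ℝ)^((i:ℕ)+r) * φ (v i) *
      (Matrix.of (fun s t => v (i.succAbove s) t)).det := by
    rw [hexp]
    refine Finset.sum_congr rfl fun i _ => ?_
    rw [hsub i, hterm i]
    simp [Fin.val_last]
  have key := congrArg (fun x => ((-1:ℝ)^r) * x) h0
  simp only [mul_zero, Finset.mul_sum] at key
  have : ∑ l : Fin (r+1), (-1:ℝ)^(l:ℕ) * φ (v l) *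
      (Matrix.of (fun i j => v (l.succAbove i) j)).det
      = ∑ i : Fin (r+1), (-1:ℝ)^r * ((-1:ℝ)^((i:ℕ)+r) * φ (v i) *
        (Matrix.of (fun s t => v (i.succAbove s) t)).det) := by
    refine Finset.sum_congr rfl fun i _ => ?_
    rw [pow_add]
    calc (-1:ℝ)^(i:ℕ) * φ (v i) * (Matrix.of (fun s t => v (i.succAbove s) t)).det
        = ((-1:ℝ)^r*(-1)^r) * ((-1:ℝ)^(i:ℕ) * φ (v i) *
            (Matrix.of (fun s t => v (i.succAbove s) t)).det) := by rw [hrr]; ring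
      _ = (-1:ℝ)^r * ((-1:ℝ)^(i:ℕ)*(-1)^r * φ (v i) *
            (Matrix.of (fun s t => v (i.succAbove s) t)).det) := by ring
  rw [this, ← key]

/-- Moving row `j` of `u` to the front costs sign `(-1)^j`. -/
lemma det_cons_eq {s : ℕ} (x : Fin (s+1) → ℝ) (w : Fin s → Fin (s+1) → ℝ)
    (u : Fin (s+1) → Fin (s+1) → ℝ) (j : Fin (s+1))
    (hj : u j = x) (hw : ∀ i : Fin s, u (j.succAbove i) = w i) :
    (Matrix.of (Fin.cons x w : Fin (s+1) → Fin (s+1) → ℝ)).det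
      = (-1:ℝ)^(j:ℕ) * (Matrix.of u).det := by
  have hu : Matrix.of u = (Matrix.of (Fin.cons x w : Fin (s+1) → Fin (s+1) → ℝ)).submatrix
      (j.cycleRange) id := by
    ext i l
    simp only [Matrix.submatrix_apply, Matrix.of_apply, id_eq]
    rcases lt_trichotomy i j with h|h|h
    · rw [Fin.cycleRange_of_lt h]
      have hi : (i:ℕ) < (j:ℕ) := h
      have hjs : (j:ℕ) ≤ s := Fin.is_le j
      have h1 : i + 1 = Fin.succ ⟨(i:ℕ), by omega⟩ := by
        apply Fin.ext
        simp [Fin.add_def]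
        omega
      rw [h1, Fin.cons_succ]
      have h2 : j.succAbove ⟨(i:ℕ), by omega⟩ = i := by
        rw [Fin.succAbove_of_castSucc_lt]
        · apply Fin.ext; simp
        · rw [Fin.lt_def]; simpa using hi
      rw [← hw ⟨(i:ℕ), by omega⟩, h2]
    · rw [h, Fin.cycleRange_self, Fin.cons_zero, hj]
    · rw [Fin.cycleRange_of_gt h]
      have hi0 : i ≠ 0 := by
        intro h0
        rw [h0] at h
        exact absurd h (by simp [Fin.lt_def])
      have h1 : i = (i.pred hi0).succ := (Fin.succ_pred i hi0).symm
      rw [h1, Fin.cons_succ]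
      have h2 : j.succAbove (i.pred hi0) = i := by
        rw [Fin.succAbove_of_le_castSucc]
        · exact (Fin.succ_pred i hi0)
        · rw [Fin.le_def]
          have : (j:ℕ) < (i:ℕ) := h
          simp [Fin.coe_pred]
          omega
      rw [← hw (i.pred hi0), h2, ← h1]
  have hperm := Matrix.det_permute (j.cycleRange)
      (Matrix.of (Fin.cons x w : Fin (s+1) → Fin (s+1) → ℝ))
  rw [← hu] at hperm
  have hsign : ((Equiv.Perm.sign j.cycleRange : ℤ) : ℝ) = (-1:ℝ)^(j:ℕ) := by
    rw [Fin.sign_cycleRange]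
    push_cast
    simp
  rw [hsign] at hperm
  have hrr : ((-1:ℝ))^(j:ℕ) * (-1)^(j:ℕ) = 1 := by
    rw [← pow_add]; exact Even.neg_one_pow ⟨(j:ℕ), rfl⟩
  calc (Matrix.of (Fin.cons x w : Fin (s+1) → Fin (s+1) → ℝ)).det
      = ((-1:ℝ)^(j:ℕ) * (-1)^(j:ℕ)) *
        (Matrix.of (Fin.cons x w : Fin (s+1) → Fin (s+1) → ℝ)).det := by rw [hrr]; ring
    _ = (-1:ℝ)^(j:ℕ) * (Matrix.of u).det := by rw [hperm]; ring

/-- Interior positions of `Fin (s+3)`. -/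
def midF {s : ℕ} (t : Fin (s+1)) : Fin (s+3) := t.succ.castSucc

/-- Three-term determinantal identity (a Grassmann–Plücker style relation):
for `s+3` rows `β`, columns `g`, a column sub-selection `S` and an interior
position `midF j`, writing `W` for the interior positions other than `midF j`. -/
lemma three_term {m n s : ℕ} (A : Matrix (Fin m) (Fin n) ℝ)
    (β : Fin (s+3) → Fin m) (g : Fin (s+2) → Fin n)
    (S : Fin (s+1) → Fin (s+2)) (j : Fin (s+1)) :
    (A.submatrix (β ∘ Fin.cons 0 (fun t => midF (j.succAbove t))) (g ∘ S)).det *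
      (A.submatrix (β ∘ Fin.succAbove 0) g).det
    - (A.submatrix (β ∘ midF) (g ∘ S)).det *
      (A.submatrix (β ∘ Fin.succAbove (midF j)) g).det
    + (A.submatrix (β ∘ Fin.snoc (fun t => midF (j.succAbove t)) (Fin.last (s+2))) (g ∘ S)).det *
      (A.submatrix (β ∘ Fin.succAbove (Fin.last (s+2))) g).det = 0 := by
  set W : Fin s → Fin (s+3) := fun t => midF (j.succAbove t) with hW
  set v : Fin (s+3) → Fin (s+2) → ℝ := fun l t => A (β l) (g t) with hv
  set wS : Fin s → Fin (s+1) → ℝ := fun t => (v (W t)) ∘ S with hwS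
  set M₀ : Matrix (Fin (s+1)) (Fin (s+1)) ℝ :=
    Matrix.of (Fin.cons (0 : Fin (s+1) → ℝ) wS) with hM₀
  have hupd : ∀ z : Fin (s+1) → ℝ,
      (Matrix.of (Fin.cons z wS : Fin (s+1) → Fin (s+1) → ℝ)) = M₀.updateRow 0 z := by
    intro z
    ext i l
    refine Fin.cases ?_ (fun t => ?_) i
    · simp [Matrix.updateRow_self]
    · rw [Matrix.updateRow_ne (Fin.succ_ne_zero t)]
      simp [hM₀]
  set φ : (Fin (s+2) → ℝ) →ₗ[ℝ] ℝ :=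
    { toFun := fun x => (Matrix.of (Fin.cons (x ∘ S) wS : Fin (s+1) → Fin (s+1) → ℝ)).det
      map_add' := by
        intro x y
        have hcomp : (x + y) ∘ S = x ∘ S + y ∘ S := rfl
        simp only [hcomp, hupd]
        exact Matrix.det_updateRow_add _ _ _ _
      map_smul' := by
        intro c x
        have hcomp : (c • x) ∘ S = c • (x ∘ S) := rfl
        simp only [hcomp, hupd]
        exact Matrix.det_updateRow_smul _ _ _ _ } with hφ
  have hsyz := syz (r := s+2) v φ
  -- identify the minors
  have hD : ∀ l : Fin (s+3),
      (Matrix.of (fun i t => v (l.succAbove i) t)).det = (A.submatrix (β ∘ l.succAbove) g).det := by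
    intro l; rfl
  have hφ0 : φ (v 0) = (A.submatrix (β ∘ Fin.cons 0 W) (g ∘ S)).det := by
    have : (Matrix.of (Fin.cons ((v 0) ∘ S) wS : Fin (s+1) → Fin (s+1) → ℝ))
        = A.submatrix (β ∘ Fin.cons 0 W) (g ∘ S) := by
      ext i l
      refine Fin.cases ?_ (fun t => ?_) i <;> rfl
    simp only [hφ, LinearMap.coe_mk, AddHom.coe_mk, this]
  have hφmid : φ (v (midF j)) = (-1:ℝ)^(j:ℕ) * (A.submatrix (β ∘ midF) (g ∘ S)).det := by
    have := det_cons_eq ((v (midF j)) ∘ S) wS (fun i => (v (midF i)) ∘ S) j rfl (fun i => rfl)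
    have hu : (Matrix.of (fun i => (v (midF i)) ∘ S) : Matrix (Fin (s+1)) (Fin (s+1)) ℝ)
        = A.submatrix (β ∘ midF) (g ∘ S) := rfl
    simp only [hφ, LinearMap.coe_mk, AddHom.coe_mk]
    rw [this, hu]
  have hφlast : φ (v (Fin.last (s+2)))
      = (-1:ℝ)^s * (A.submatrix (β ∘ Fin.snoc W (Fin.last (s+2))) (g ∘ S)).det := by
    have hins := det_cons_eq ((v (Fin.last (s+2))) ∘ S) wS
      (fun i => (v ((Fin.snoc W (Fin.last (s+2)) : Fin (s+1) → Fin (s+3)) i)) ∘ S) (Fin.last s)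
      (by simp) (fun i => by
        have : (Fin.last s).succAbove i = i.castSucc := by rw [Fin.succAbove_last]
        rw [this]
        simp [Fin.snoc_castSucc]; rfl)
    have hu : (Matrix.of (fun i => (v ((Fin.snoc W (Fin.last (s+2)) : Fin (s+1) → Fin (s+3)) i)) ∘ S)
          : Matrix (Fin (s+1)) (Fin (s+1)) ℝ)
        = A.submatrix (β ∘ Fin.snoc W (Fin.last (s+2))) (g ∘ S) := rfl
    simp only [hφ, LinearMap.coe_mk, AddHom.coe_mk]
    rw [hins, hu]
    simp [Fin.val_last]
  have hφW : ∀ t' : Fin s, φ (v (W t')) = 0 := by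
    intro t'
    simp only [hφ, LinearMap.coe_mk, AddHom.coe_mk]
    apply Matrix.det_zero_of_row_eq (Fin.succ_ne_zero t').symm
    show (Fin.cons ((v (W t')) ∘ S) wS : Fin (s+1) → Fin (s+1) → ℝ) 0
        = (Fin.cons ((v (W t')) ∘ S) wS : Fin (s+1) → Fin (s+1) → ℝ) t'.succ
    rw [Fin.cons_zero, Fin.cons_succ]
  set F : Fin (s+3) → ℝ := fun l => (-1:ℝ)^(l:ℕ) * φ (v l) *
      (Matrix.of (fun i t => v (l.succAbove i) t)).det with hF
  have hdistinct : ((0 : Fin (s+3)) ≠ midF j) ∧ (midF j ≠ Fin.last (s+2)) ∧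
      ((0:Fin (s+3)) ≠ Fin.last (s+2)) := by
    refine ⟨?_, ?_, ?_⟩ <;> (intro h; apply_fun (fun x => (x : ℕ)) at h) <;>
      simp [midF, Fin.val_last] at h
    have := j.is_le; omega
  have hvanish : ∀ x ∈ Finset.univ, x ∉ ({0, midF j, Fin.last (s+2)} : Finset (Fin (s+3))) →
      F x = 0 := by
    intro x _ hx
    simp only [Finset.mem_insert, Finset.mem_singleton, not_or] at hx
    obtain ⟨hx0, hxm, hxl⟩ := hx
    have hxv0 : (x:ℕ) ≠ 0 := fun h => hx0 (Fin.ext (by simpa using h))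
    have hxvl : (x:ℕ) ≠ s+2 := fun h => hxl (Fin.ext (by simp [Fin.val_last, h]))
    have hxle := x.is_le
    set t : Fin (s+1) := ⟨(x:ℕ) - 1, by omega⟩ with ht
    have hxt : x = midF t := by
      apply Fin.ext; show (x:ℕ) = ((x:ℕ) - 1) + 1; omega
    have htj : t ≠ j := by
      intro h; rw [h] at hxt; exact hxm hxt
    obtain ⟨t', ht'⟩ := Fin.exists_succAbove_eq htj
    have hxw : x = W t' := by rw [hxt, ← ht']
    rw [hF]
    simp only [hxw, hφW t', mul_zero, zero_mul]
  have hsum3 : ∑ l : Fin (s+3), F l = F 0 + F (midF j) + F (Fin.last (s+2)) := by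
    rw [← Finset.sum_subset (Finset.subset_univ
      ({0, midF j, Fin.last (s+2)} : Finset (Fin (s+3)))) hvanish]
    rw [Finset.sum_insert (by simp [hdistinct.1, hdistinct.2.2]),
        Finset.sum_insert (by simp [hdistinct.2.1]), Finset.sum_singleton]
    ring
  rw [hsum3] at hsyz
  have e0 : F 0 = (A.submatrix (β ∘ Fin.cons 0 W) (g ∘ S)).det *
      (A.submatrix (β ∘ Fin.succAbove 0) g).det := by
    rw [hF]; simp only [hφ0, hD]; simp
  have hrrj : ((-1:ℝ))^(j:ℕ) * (-1)^(j:ℕ) = 1 := by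
    rw [← pow_add]; exact Even.neg_one_pow ⟨(j:ℕ), rfl⟩
  have hrrs : ((-1:ℝ))^(s+2) * (-1)^s = 1 := by
    rw [← pow_add]; exact Even.neg_one_pow ⟨s+1, by ring⟩
  have emid : F (midF j) = - ((A.submatrix (β ∘ midF) (g ∘ S)).det *
      (A.submatrix (β ∘ Fin.succAbove (midF j)) g).det) := by
    rw [hF]
    simp only [hφmid, hD]
    have hval : ((midF j : Fin (s+3)) : ℕ) = (j:ℕ) + 1 := by simp [midF]
    rw [hval, pow_succ]
    linear_combination (-( (A.submatrix (β ∘ midF) (g ∘ S)).det *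
      (A.submatrix (β ∘ Fin.succAbove (midF j)) g).det)) * hrrj
  have elast : F (Fin.last (s+2)) =
      (A.submatrix (β ∘ Fin.snoc W (Fin.last (s+2))) (g ∘ S)).det *
      (A.submatrix (β ∘ Fin.succAbove (Fin.last (s+2))) g).det := by
    rw [hF]
    simp only [hφlast, hD, Fin.val_last]
    linear_combination ((A.submatrix (β ∘ Fin.snoc W (Fin.last (s+2))) (g ∘ S)).det *
      (A.submatrix (β ∘ Fin.succAbove (Fin.last (s+2))) g).det) * hrrs
  rw [e0, emid, elast] at hsyz
  linarith [hsyz]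

lemma contig_strictMono {r m : ℕ} {f : Fin r → Fin m} (h : Contig f) : StrictMono f := by
  obtain ⟨a, ha⟩ := h
  intro i j hij
  rw [Fin.lt_def, ha i, ha j]
  have : (i:ℕ) < (j:ℕ) := hij
  omega

lemma contig_of_steps {s m : ℕ} {f : Fin (s+2) → Fin m}
    (h : ∀ t : Fin (s+1), (f t.succ : ℕ) = (f t.castSucc : ℕ) + 1) : Contig f := by
  refine ⟨(f 0 : ℕ), fun i => ?_⟩
  induction i using Fin.induction with
  | zero => simp
  | succ t ih =>
    rw [h t, ih]
    simp [Fin.coe_castSucc, Fin.val_succ]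
    omega

lemma concludeAux (se sg N1 N2 N3 D0 Dl Df : ℝ)
    (htt : N1*D0 - N2*Df + N3*Dl = 0)
    (h1 : 0 < se*N1) (h2 : 0 < se*N2) (h3 : 0 < se*N3)
    (hD0 : 0 < sg*D0) (hDl : 0 < sg*Dl) : 0 < sg*Df := by
  have key : (se * N2) * (sg * Df) = (se * N1) * (sg * D0) + (se * N3) * (sg * Dl) := by
    linear_combination (-(se*sg)) * htt
  have hpos : 0 < (se * N2) * (sg * Df) := by
    rw [key]
    exact add_pos (mul_pos h1 hD0) (mul_pos h3 hDl)
  nlinarith [hpos, h2]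

lemma phaseRows {m n s : ℕ} (A : Matrix (Fin m) (Fin n) ℝ) (sg se : ℝ)
    (G : (Fin (s+2) → Fin n) → Prop)
    (Hsmall : ∀ (f' : Fin (s+1) → Fin m) (g' : Fin (s+1) → Fin n),
      StrictMono f' → StrictMono g' → 0 < se * (A.submatrix f' g').det)
    (Hbase : ∀ (f : Fin (s+2) → Fin m) (g : Fin (s+2) → Fin n),
      StrictMono f → StrictMono g → G g → Contig f → 0 < sg * (A.submatrix f g).det) :
    ∀ (f : Fin (s+2) → Fin m) (g : Fin (s+2) → Fin n),
      StrictMono f → StrictMono g → G g → 0 < sg * (A.submatrix f g).det := by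
  suffices H : ∀ d (f : Fin (s+2) → Fin m) (g : Fin (s+2) → Fin n),
      StrictMono f → StrictMono g → G g → ((f (Fin.last (s+1)) : ℕ) - (f 0 : ℕ)) ≤ d →
      0 < sg * (A.submatrix f g).det by
    intro f g hf hg hG
    exact H _ f g hf hg hG le_rfl
  intro d
  induction d with
  | zero =>
    intro f g hf hg hG hspan
    exfalso
    have h0 : (0 : Fin (s+2)) < Fin.last (s+1) := by
      rw [Fin.lt_def]; simp [Fin.val_last]
    have := hf h0
    rw [Fin.lt_def] at this
    omega
  | succ d ih =>
    intro f g hf hg hG hspan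
    by_cases hcont : ∀ t : Fin (s+1), (f t.succ : ℕ) = (f t.castSucc : ℕ) + 1
    · exact Hbase f g hf hg hG (contig_of_steps hcont)
    · push_neg at hcont
      obtain ⟨t, ht⟩ := hcont
      have hfc : ∀ u : Fin (s+1), (f u.castSucc : ℕ) < (f u.succ : ℕ) := by
        intro u; exact hf (Fin.castSucc_lt_succ : u.castSucc < u.succ)
      have hstep : (f t.castSucc : ℕ) + 1 < (f t.succ : ℕ) := by
        have := hfc t; omega
      have hqm : (f t.castSucc : ℕ) + 1 < m := by
        have := (f t.succ).isLt; omega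
      set q : Fin m := ⟨(f t.castSucc : ℕ) + 1, hqm⟩ with hq
      have htle : (t : ℕ) ≤ s := by have := t.is_le; omega
      set β : Fin (s+3) → Fin m := fun i =>
        if h1 : (i:ℕ) ≤ (t:ℕ) then f ⟨(i:ℕ), by omega⟩
        else if h2 : (i:ℕ) = (t:ℕ)+1 then q
        else f ⟨(i:ℕ)-1, by have := i.is_le; omega⟩ with hβ
      have hfnat : ∀ (a b : ℕ) (ha : a < s+2) (hb : b < s+2), a < b →
          (f ⟨a, ha⟩ : ℕ) < (f ⟨b, hb⟩ : ℕ) := by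
        intro a b ha hb hab
        exact hf (show (⟨a,ha⟩ : Fin (s+2)) < ⟨b,hb⟩ from hab)
      have hβa : ∀ (i : Fin (s+3)) (h : (i:ℕ) ≤ (t:ℕ)),
          (β i : ℕ) = (f ⟨(i:ℕ), by omega⟩ : ℕ) := by
        intro i h
        simp only [hβ]
        rw [dif_pos h]
      have hβb : ∀ (i : Fin (s+3)), (i:ℕ) = (t:ℕ)+1 → (β i : ℕ) = (f t.castSucc : ℕ) + 1 := by
        intro i h
        simp only [hβ]
        rw [dif_neg (by omega), dif_pos h, hq]
      have hβc : ∀ (i : Fin (s+3)) (h : (t:ℕ)+1 < (i:ℕ)),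
          (β i : ℕ) = (f ⟨(i:ℕ)-1, by have := i.is_le; omega⟩ : ℕ) := by
        intro i h
        simp only [hβ]
        rw [dif_neg (by omega), dif_neg (by omega)]
      -- β recovers f when the inserted position is skipped
      have hrecover : β ∘ Fin.succAbove (midF t) = f := by
        funext i
        simp only [Function.comp_apply]
        apply Fin.ext
        by_cases hit : (i : ℕ) < (t:ℕ)+1
        · have hcs : (midF t).succAbove i = i.castSucc := by
            apply Fin.succAbove_of_castSucc_lt
            rw [Fin.lt_def]
            simpa [midF] using hit
          have hv : ((i.castSucc : Fin (s+3)) : ℕ) = (i:ℕ) := by simp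
          rw [hcs, hβa _ (by omega)]
          exact congrArg _ (congrArg f (Fin.ext (by simp)))
        · have hcs : (midF t).succAbove i = i.succ := by
            apply Fin.succAbove_of_le_castSucc
            rw [Fin.le_def]
            simp [midF]
            omega
          have hv : ((i.succ : Fin (s+3)) : ℕ) = (i:ℕ)+1 := by simp
          rw [hcs, hβc _ (by omega)]
          exact congrArg _ (congrArg f (Fin.ext (by simp)))
      -- β is strictly monotone
      have hβmono : StrictMono β := by
        rw [Fin.strictMono_iff_lt_succ]
        intro i
        have hics : ((i.castSucc : Fin (s+3)) : ℕ) = (i:ℕ) := by simp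
        have hisu : ((i.succ : Fin (s+3)) : ℕ) = (i:ℕ)+1 := by simp
        have hile := i.is_le
        rw [Fin.lt_def]
        by_cases c1 : (i:ℕ) < (t:ℕ)
        · rw [hβa i.castSucc (by omega), hβa i.succ (by omega)]
          exact hfnat _ _ _ _ (by omega)
        · by_cases c2 : (i:ℕ) = (t:ℕ)
          · rw [hβa i.castSucc (by omega), hβb i.succ (by omega)]
            have he : (⟨((i.castSucc : Fin (s+3)) : ℕ), by omega⟩ : Fin (s+2)) = t.castSucc :=
              Fin.ext (by simp [c2])
            rw [he]
            omega
          · by_cases c3 : (i:ℕ) = (t:ℕ)+1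
            · rw [hβb i.castSucc (by omega), hβc i.succ (by omega)]
              have he : (⟨((i.succ : Fin (s+3)) : ℕ)-1,
                  by have := (i.succ : Fin (s+3)).is_le; omega⟩ : Fin (s+2)) = t.succ :=
                Fin.ext (by simp [c3])
              rw [he]
              omega
            · rw [hβc i.castSucc (by omega), hβc i.succ (by omega)]
              exact hfnat _ _ _ _ (by omega)
      -- endpoints of β
      have hβ0 : (β 0 : ℕ) = (f 0 : ℕ) := by
        rw [hβa 0 (by simp)]
        exact congrArg _ (congrArg f (Fin.ext (by simp)))
      have hβlast : (β (Fin.last (s+2)) : ℕ) = (f (Fin.last (s+1)) : ℕ) := by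
        rw [hβc (Fin.last (s+2)) (by rw [Fin.val_last]; omega)]
        exact congrArg _ (congrArg f (Fin.ext (by simp [Fin.val_last])))
      -- key value comparisons of β near the endpoints
      have hβ1 : (f 0 : ℕ) < (β 1 : ℕ) := by
        have h01 : (0 : Fin (s+3)) < 1 := by rw [Fin.lt_def]; simp
        have := hβmono h01
        rw [Fin.lt_def] at this
        omega
      have hpenlt : (⟨s+1, by omega⟩ : Fin (s+3)) < Fin.last (s+2) := by
        rw [Fin.lt_def]; simp [Fin.val_last]
      have hβpen : (β ⟨s+1, by omega⟩ : ℕ) < (f (Fin.last (s+1)) : ℕ) := by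
        have := hβmono hpenlt
        rw [Fin.lt_def] at this
        omega
      -- the two boundary minors, known by induction on span
      have hf1mono : StrictMono (β ∘ Fin.succAbove 0) :=
        hβmono.comp (Fin.strictMono_succAbove 0)
      have hf2mono : StrictMono (β ∘ Fin.succAbove (Fin.last (s+2))) :=
        hβmono.comp (Fin.strictMono_succAbove (Fin.last (s+2)))
      have hspan1 : (((β ∘ Fin.succAbove 0) (Fin.last (s+1))) : ℕ)
          - (((β ∘ Fin.succAbove 0) 0) : ℕ) ≤ d := by
        have e1 : (Fin.succAbove (0 : Fin (s+3)) (Fin.last (s+1))) = Fin.last (s+2) := by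
          rw [Fin.zero_succAbove, Fin.succ_last]
        have e2 : (Fin.succAbove (0 : Fin (s+3)) (0 : Fin (s+2))) = (1 : Fin (s+3)) := by
          rw [Fin.zero_succAbove]
          rfl
        simp only [Function.comp_apply, e1, e2]
        omega
      have hspan2 : (((β ∘ Fin.succAbove (Fin.last (s+2))) (Fin.last (s+1))) : ℕ)
          - (((β ∘ Fin.succAbove (Fin.last (s+2))) 0) : ℕ) ≤ d := by
        have e1 : (Fin.succAbove (Fin.last (s+2)) (Fin.last (s+1)))
            = (⟨s+1, by omega⟩ : Fin (s+3)) := by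
          rw [Fin.succAbove_last]
          apply Fin.ext; simp [Fin.val_last]
        have e2 : (Fin.succAbove (Fin.last (s+2)) (0 : Fin (s+2))) = (0 : Fin (s+3)) := by
          rw [Fin.succAbove_last]
          rfl
        simp only [Function.comp_apply, e1, e2]
        omega
      have hD0 := ih (β ∘ Fin.succAbove 0) g hf1mono hg hG hspan1
      have hDl := ih (β ∘ Fin.succAbove (Fin.last (s+2))) g hf2mono hg hG hspan2
      -- the three small minors
      have hmidmono : StrictMono (midF : Fin (s+1) → Fin (s+3)) := by
        intro a b hab
        rw [Fin.lt_def]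
        simp [midF]
        exact hab
      have hWmono : StrictMono (fun t' : Fin s => midF (t.succAbove t')) :=
        hmidmono.comp (Fin.strictMono_succAbove t)
      have hconsmono : StrictMono
          (Fin.cons 0 (fun t' : Fin s => midF (t.succAbove t')) : Fin (s+1) → Fin (s+3)) := by
        intro a b hab
        induction b using Fin.cases with
        | zero => exact absurd hab (by simp)
        | succ b' =>
          induction a using Fin.cases with
          | zero =>
            rw [Fin.cons_zero, Fin.cons_succ]
            rw [Fin.lt_def]
            simp [midF]
          | succ a' =>
            rw [Fin.cons_succ, Fin.cons_succ]
            exact hWmono (Fin.succ_lt_succ_iff.mp hab)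
      have hsnocmono : StrictMono
          (Fin.snoc (fun t' : Fin s => midF (t.succAbove t')) (Fin.last (s+2))
            : Fin (s+1) → Fin (s+3)) := by
        intro a b hab
        induction b using Fin.lastCases with
        | last =>
          induction a using Fin.lastCases with
          | last => exact absurd hab (lt_irrefl _)
          | cast a' =>
            rw [Fin.snoc_castSucc, Fin.snoc_last, Fin.lt_def]
            have h1 : (midF (t.succAbove a') : ℕ) = ((t.succAbove a') : ℕ) + 1 := by simp [midF]
            have h2 := (t.succAbove a').is_le
            have h3 : ((Fin.last (s+2)) : ℕ) = s+2 := Fin.val_last _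
            omega
        | cast b' =>
          induction a using Fin.lastCases with
          | last => exact absurd (lt_of_le_of_lt (Fin.le_last _) hab) (lt_irrefl _)
          | cast a' =>
            rw [Fin.snoc_castSucc, Fin.snoc_castSucc]
            exact hWmono (by
              rw [Fin.lt_def] at hab ⊢
              simpa using hab)
      have hgS : StrictMono (g ∘ Fin.castSucc) := hg.comp Fin.strictMono_castSucc
      have hN1 := Hsmall (β ∘ Fin.cons 0 (fun t' : Fin s => midF (t.succAbove t')))
        (g ∘ Fin.castSucc) (hβmono.comp hconsmono) hgS
      have hN2 := Hsmall (β ∘ midF) (g ∘ Fin.castSucc) (hβmono.comp hmidmono) hgS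
      have hN3 := Hsmall (β ∘ Fin.snoc (fun t' : Fin s => midF (t.succAbove t')) (Fin.last (s+2)))
        (g ∘ Fin.castSucc) (hβmono.comp hsnocmono) hgS
      -- the three-term identity
      have htt := three_term A β g Fin.castSucc t
      rw [hrecover] at htt
      exact concludeAux se sg _ _ _ _ _ _ htt hN1 hN2 hN3 hD0 hDl

theorem stmt6 {m n k : ℕ} (hk : 1 ≤ k) (hkm : k ≤ m) (hkn : k ≤ n)
    (A : Matrix (Fin m) (Fin n) ℝ) :
    (∀ r : ℕ, 1 ≤ r → r ≤ k → ∃ s : ℝ, (s = 1 ∨ s = -1) ∧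
        ∀ (f : Fin r → Fin m) (g : Fin r → Fin n), StrictMono f → StrictMono g →
          0 < s * (A.submatrix f g).det) ↔
      (∀ r : ℕ, 1 ≤ r → r ≤ k → ∃ s : ℝ, (s = 1 ∨ s = -1) ∧
        ∀ (f : Fin r → Fin m) (g : Fin r → Fin n), Contig f → Contig g →
          0 < s * (A.submatrix f g).det) := by
  have hdetT : ∀ (r : ℕ) (f : Fin r → Fin m) (g : Fin r → Fin n),
      ((Aᵀ).submatrix g f).det = (A.submatrix f g).det := by
    intro r f g
    rw [← Matrix.transpose_submatrix, Matrix.det_transpose]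
  constructor
  · intro H r hr1 hrk
    obtain ⟨s, hs, hall⟩ := H r hr1 hrk
    exact ⟨s, hs, fun f g hf hg =>
      hall f g (contig_strictMono hf) (contig_strictMono hg)⟩
  · intro H
    have main : ∀ r, 1 ≤ r → r ≤ k → ∀ s : ℝ,
        (∀ (f : Fin r → Fin m) (g : Fin r → Fin n), Contig f → Contig g →
          0 < s * (A.submatrix f g).det) →
        ∀ (f : Fin r → Fin m) (g : Fin r → Fin n), StrictMono f → StrictMono g →
          0 < s * (A.submatrix f g).det := by
      intro r
      induction r using Nat.strong_induction_on with
      | _ r ih =>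
        intro hr1 hrk s hcontig f g hf hg
        match r, hr1, hrk, ih, hcontig, f, g, hf, hg with
        | 1, _, _, _, hcontig, f, g, hf, hg =>
          refine hcontig f g ⟨(f 0 : ℕ), fun i => ?_⟩ ⟨(g 0 : ℕ), fun i => ?_⟩ <;>
          · have hi : i = 0 := Subsingleton.elim i 0
            rw [hi]
            simp
        | (s'+2), _, hrk, ih, hcontig, f, g, hf, hg =>
          obtain ⟨se, hse, hsecontig⟩ := H (s'+1) (by omega) (by omega)
          have hsmall : ∀ (f' : Fin (s'+1) → Fin m) (g' : Fin (s'+1) → Fin n),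
              StrictMono f' → StrictMono g' → 0 < se * (A.submatrix f' g').det :=
            ih (s'+1) (by omega) (by omega) (by omega) se hsecontig
          have hsmallT : ∀ (f' : Fin (s'+1) → Fin n) (g' : Fin (s'+1) → Fin m),
              StrictMono f' → StrictMono g' → 0 < se * ((Aᵀ).submatrix f' g').det := by
            intro f' g' hf' hg'
            rw [hdetT (s'+1) g' f']
            exact hsmall g' f' hg' hf'
          have pA := phaseRows (Aᵀ) s se (fun gT : Fin (s'+2) → Fin m => Contig gT)
            hsmallT
            (fun fT gT hfT hgT hGT hCfT => by
              rw [hdetT (s'+2) gT fT]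
              exact hcontig gT fT hGT hCfT)
          have phaseA : ∀ (f : Fin (s'+2) → Fin m) (g : Fin (s'+2) → Fin n),
              StrictMono f → StrictMono g → (fun _ => True) g → Contig f →
              0 < s * (A.submatrix f g).det := by
            intro f g hf hg _ hcf
            rw [← hdetT (s'+2) f g]
            exact pA g f hg hf hcf
          have pB := phaseRows A s se (fun _ => True) hsmall phaseA
          exact pB f g hf hg trivial
    intro r hr1 hrk
    obtain ⟨s, hs, hcontig⟩ := H r hr1 hrk
    exact ⟨s, hs, main r hr1 hrk s hcontig⟩
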